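/- Let X be a metric space and f : X → ℝ a function that is bounded and uniformly continuous on all of X. Then f_λ converges to f uniformly on X as λ → 0⁺. -/
import Mathlib


/-- Real-valued Moreau envelope. -/
noncomputable def moreauEnvR {X : Type*} [MetricSpace X] (f : X → ℝ) (l : ℝ) (x : X) : ℝ :=
  ⨅ y, (f y + dist x y ^ 2 / (2 * l))

/-- If `f` is bounded and uniformly continuous on `X`, then `f_λ → f` uniformly on `X`
as `λ → 0⁺`. -/
theorem moreauEnvR_tendsto_uniformly {X : Type*} [MetricSpace X] [Nonempty X]
    (f : X → ℝ) (k : ℝ) (hk : ∀ x, |f x| ≤ k) (hu : UniformContinuous f) :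
    ∀ ε > (0 : ℝ), ∃ l₀ > (0 : ℝ), ∀ l : ℝ, 0 < l → l < l₀ →
      ∀ x, |moreauEnvR f l x - f x| ≤ ε := by
  intro ε hε
  obtain ⟨δ, hδ, hδf⟩ := Metric.uniformContinuous_iff.mp hu ε hε
  have hk0 : 0 ≤ k := le_trans (abs_nonneg _) (hk (Classical.arbitrary X))
  refine ⟨δ ^ 2 / (4 * k + 1), by positivity, ?_⟩
  intro l hl hll x
  have hll' : l * (4 * k + 1) < δ ^ 2 := (lt_div_iff₀ (by linarith)).mp hll
  have hbdd : BddBelow (Set.range fun y => f y + dist x y ^ 2 / (2 * l)) := by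
    refine ⟨-k, ?_⟩
    rintro _ ⟨y, rfl⟩
    have h1 := neg_le_of_abs_le (hk y)
    have h2 : 0 ≤ dist x y ^ 2 / (2 * l) := by positivity
    simp only
    linarith
  have hub : moreauEnvR f l x ≤ f x := by
    have := ciInf_le hbdd x
    simpa [moreauEnvR] using this
  have hlb : f x - ε ≤ moreauEnvR f l x := by
    apply le_ciInf
    intro y
    by_cases h : dist x y < δ
    · have hfy : |f x - f y| < ε := by
        have := hδf h
        rw [Real.dist_eq] at this
        simpa using this
      have h2 := (abs_lt.mp hfy).2
      have hd : 0 ≤ dist x y ^ 2 / (2 * l) := by positivity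
      linarith
    · push_neg at h
      have hfx : f x ≤ k := le_of_abs_le (hk x)
      have hfy : -k ≤ f y := neg_le_of_abs_le (hk y)
      have hd2 : δ ^ 2 ≤ dist x y ^ 2 := by nlinarith [dist_nonneg (x := x) (y := y)]
      have h2k : 2 * k ≤ dist x y ^ 2 / (2 * l) := by
        rw [le_div_iff₀ (by linarith)]
        nlinarith
      linarith [hε.le]
  rw [abs_le]
  constructor <;> linarith
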